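/- (i) 𝒢₂(2) ⊆ 𝒢₄(2). (ii) Let γ ∈ 𝒢₄(2) and let α ⊆ γ be the subgraph consisting of the labelled vertex 1 together with all edges outgoing from vertex 1 and their target vertices. If no edge outgoing from the labelled vertex 2 has as its target an unlabelled vertex that is neither a vertex of α nor a sink of γ, then every edge of γ goes either from a labelled vertex to an unlabelled vertex or from vertex 2 to vertex 1; that is, γ ∈ 𝒢₂(2). (This is the cancellation step in the proof of the paper's Theorem giving the graphical formula for the interacting star product ⋆_{𝒯,int}.) -/

import Mathlib

attribute [local instance] Classical.propDecidable

/-- A finite directed multigraph with `n` labelled vertices (the elements of `Fin n`)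
and a finite set `V` of unlabelled vertices. -/
structure PreGraph (n : ℕ) where
  V : Type
  E : Type
  finV : Finite V
  finE : Finite E
  src : E → Fin n ⊕ V
  tgt : E → Fin n ⊕ V

attribute [instance] PreGraph.finV PreGraph.finE

namespace PreGraph

/-- `γ ∈ 𝒢(n)`: every unlabelled vertex has valency ≥ 1. -/
def IsGraph {n : ℕ} (γ : PreGraph n) : Prop :=
  ∀ v : γ.V, ∃ e : γ.E, γ.src e = Sum.inr v ∨ γ.tgt e = Sum.inr v

/-- The two endpoints of "an edge or a vertex" (a vertex counting as a degenerate edge). -/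
def ends {m : ℕ} (β : PreGraph m) : β.E ⊕ (Fin m ⊕ β.V) → (Fin m ⊕ β.V) × (Fin m ⊕ β.V)
  | Sum.inl e => (β.src e, β.tgt e)
  | Sum.inr x => (x, x)

end PreGraph

/-- A morphism of labelled graphs: vertices map to vertices, edges map to edges or collapse
to vertices, sources and targets are respected, and labelled vertices map to labelled
vertices preserving their order. -/
structure GMor {n m : ℕ} (α : PreGraph n) (β : PreGraph m) where
  onL : Fin n → Fin m
  monoL : Monotone onL
  onV : Fin n ⊕ α.V → Fin m ⊕ β.V
  hL : ∀ i : Fin n, onV (Sum.inl i) = Sum.inl (onL i)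
  onE : α.E → β.E ⊕ (Fin m ⊕ β.V)
  hE : ∀ e : α.E, β.ends (onE e) = (onV (α.src e), onV (α.tgt e))

namespace GMor

/-- Auxiliary: the action of a morphism on "edges or vertices". -/
def compE {m p : ℕ} {β : PreGraph m} {γ : PreGraph p} (g : GMor β γ) :
    β.E ⊕ (Fin m ⊕ β.V) → γ.E ⊕ (Fin p ⊕ γ.V)
  | Sum.inl e => g.onE e
  | Sum.inr x => Sum.inr (g.onV x)

theorem ends_compE {m p : ℕ} {β : PreGraph m} {γ : PreGraph p} (g : GMor β γ)
    (x : β.E ⊕ (Fin m ⊕ β.V)) :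
    γ.ends (g.compE x) = (g.onV (β.ends x).1, g.onV (β.ends x).2) := by
  cases x with
  | inl e => exact g.hE e
  | inr y => rfl

/-- Composition of graph morphisms. -/
def comp {n m p : ℕ} {α : PreGraph n} {β : PreGraph m} {γ : PreGraph p}
    (g : GMor β γ) (f : GMor α β) : GMor α γ where
  onL := g.onL ∘ f.onL
  monoL := g.monoL.comp f.monoL
  onV := g.onV ∘ f.onV
  hL := fun i => by simp only [Function.comp_apply, f.hL i, g.hL (f.onL i)]
  onE := fun e => g.compE (f.onE e)
  hE := fun e => by rw [ends_compE, f.hE e]; rfl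

end GMor

/-- An isomorphism of labelled graphs (fixing the labels pointwise). -/
structure GIso {n : ℕ} (α β : PreGraph n) where
  eV : α.V ≃ β.V
  eE : α.E ≃ β.E
  hsrc : ∀ e : α.E, β.src (eE e) = Sum.map id eV (α.src e)
  htgt : ∀ e : α.E, β.tgt (eE e) = Sum.map id eV (α.tgt e)

/-- An isomorphism, regarded as a morphism. -/
def GIso.toGMor {n : ℕ} {α β : PreGraph n} (θ : GIso α β) : GMor α β where
  onL := id
  monoL := monotone_id
  onV := Sum.map id θ.eV
  hL := fun _ => rfl
  onE := fun e => Sum.inl (θ.eE e)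
  hE := fun e => by simp only [PreGraph.ends, θ.hsrc e, θ.htgt e]

/-- The collapse map on labels: `qmap n j` sends the window `[j, j+n]` of `Fin (n+m+1)` to `j`
and is the order-preserving bijection elsewhere. -/
def qmap (n : ℕ) {m : ℕ} (j : Fin (m + 1)) (i : Fin (n + m + 1)) : Fin (m + 1) :=
  if h : i.val ≤ j.val then ⟨i.val, by have := j.isLt; omega⟩
  else if h2 : i.val ≤ j.val + n then j
  else ⟨i.val - n, by have := i.isLt; omega⟩

/-- `(u, v)` is an extension of `γ` by `α` at the labelled vertex `j`, with middle graph `β`: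
`u : α ↪ β` is injective, `v : β ↠ γ` is surjective, `u(α) = v⁻¹(j)`, and the restriction of
`v` to the complement of `u(α)` is injective. -/
structure IsExtension {n m : ℕ} {α : PreGraph (n + 1)} {β : PreGraph (n + m + 1)}
    {γ : PreGraph (m + 1)} (j : Fin (m + 1)) (u : GMor α β) (v : GMor β γ) : Prop where
  uLab : ∀ i : Fin (n + 1), (u.onL i).val = j.val + i.val
  vLab : ∀ i : Fin (n + m + 1), v.onL i = qmap n j i
  uVinj : Function.Injective u.onV
  uEedge : ∀ e : α.E, ∃ e' : β.E, u.onE e = Sum.inl e'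
  uEinj : Function.Injective u.onE
  vVsurj : Function.Surjective v.onV
  vEsurj : ∀ e' : γ.E, ∃ e : β.E, v.onE e = Sum.inl e'
  imV : Set.range u.onV = {x | v.onV x = Sum.inl j}
  imE : {e' : β.E | ∃ e : α.E, u.onE e = Sum.inl e'} =
    {e' : β.E | v.onE e' = Sum.inr (Sum.inl j)}
  compEedge : ∀ e' : β.E, (¬ ∃ e : α.E, u.onE e = Sum.inl e') →
    ∃ eγ : γ.E, v.onE e' = Sum.inl eγ
  compVinj : Set.InjOn v.onV {x | x ∉ Set.range u.onV}
  compEinj : Set.InjOn v.onE {e' : β.E | ¬ ∃ e : α.E, u.onE e = Sum.inl e'}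

namespace PreGraph

/-- One directed step along an edge. -/
def Step {n : ℕ} (γ : PreGraph n) (x y : Fin n ⊕ γ.V) : Prop :=
  ∃ e : γ.E, γ.src e = x ∧ γ.tgt e = y

/-- Existence of a directed path (possibly empty). -/
def Reaches {n : ℕ} (γ : PreGraph n) : (Fin n ⊕ γ.V) → (Fin n ⊕ γ.V) → Prop :=
  Relation.ReflTransGen γ.Step

/-- There are no directed cycles. -/
def NoCycles {n : ℕ} (γ : PreGraph n) : Prop :=
  ∀ e : γ.E, ¬ γ.Reaches (γ.tgt e) (γ.src e)

/-- A sink: an unlabelled vertex with no outgoing edges. -/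
def IsSink {n : ℕ} (γ : PreGraph n) (w : γ.V) : Prop :=
  ¬ ∃ e : γ.E, γ.src e = Sum.inr w

end PreGraph

/-- `𝒢₂(1)`: every edge goes from the labelled vertex `1` to an unlabelled vertex. -/
def G2one (α : PreGraph 1) : Prop :=
  ∀ e : α.E, α.src e = Sum.inl 0 ∧ ∃ w : α.V, α.tgt e = Sum.inr w

/-- `𝒢₂(2)`: every edge goes from a labelled vertex to an unlabelled vertex or from the
labelled vertex `2` to the labelled vertex `1`. -/
def G2two (γ : PreGraph 2) : Prop :=
  ∀ e : γ.E,
    ((γ.src e = Sum.inl 0 ∨ γ.src e = Sum.inl 1) ∧ ∃ w : γ.V, γ.tgt e = Sum.inr w) ∨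
    (γ.src e = Sum.inl 1 ∧ γ.tgt e = Sum.inl 0)

/-- `𝒢₃(2)`: every unlabelled vertex has at least one ingoing and one outgoing edge, there
are no directed cycles, and there is no directed path from vertex `1` to vertex `2`. -/
def G3two (δ : PreGraph 2) : Prop :=
  (∀ w : δ.V, (∃ e : δ.E, δ.tgt e = Sum.inr w) ∧ (∃ e : δ.E, δ.src e = Sum.inr w)) ∧
    δ.NoCycles ∧ ¬ δ.Reaches (Sum.inl 0) (Sum.inl 1)

/-- `𝒢₄(2)`: graphs obtained from a graph in `𝒢₃(2)` by an extension by a graph in `𝒢₂(1)`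
at the labelled vertex `1` followed by an extension by a graph in `𝒢₂(1)` at the labelled
vertex `2`. -/
def G4two (γ : PreGraph 2) : Prop :=
  ∃ (α₁ α₂ : PreGraph 1) (δ β' : PreGraph 2)
    (u₁ : GMor α₁ β') (v₁ : GMor β' δ) (u₂ : GMor α₂ γ) (v₂ : GMor γ β'),
      α₁.IsGraph ∧ α₂.IsGraph ∧ δ.IsGraph ∧ β'.IsGraph ∧
      G2one α₁ ∧ G2one α₂ ∧ G3two δ ∧
      IsExtension (0 : Fin 2) u₁ v₁ ∧ IsExtension (1 : Fin 2) u₂ v₂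


section Ext

open Sum

theorem fin2cases (i : Fin 2) : i = 0 ∨ i = 1 := by fin_cases i <;> simp
theorem qmap_zero {j i : Fin 2} : qmap 0 j i = i := by
  unfold qmap
  split_ifs with h1 h2
  · exact Fin.ext rfl
  · omega
  · exact Fin.ext (Nat.sub_zero i.val)

variable {α : PreGraph 1} {β γ : PreGraph 2} {j : Fin 2} {u : GMor α β} {v : GMor β γ}

theorem vL (h : IsExtension j u v) (i : Fin 2) : v.onL i = i := by
  rw [h.vLab]; exact qmap_zero

theorem vV_inl (h : IsExtension j u v) (i : Fin 2) : v.onV (inl i) = inl i := by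
  rw [v.hL, vL h]

theorem uV_inl (h : IsExtension j u v) : u.onV (inl 0) = inl j := by
  rw [u.hL]
  congr 1
  exact Fin.ext (by simpa using h.uLab 0)

theorem mem_range_iff (h : IsExtension j u v) (x : Fin 2 ⊕ β.V) :
    x ∈ Set.range u.onV ↔ v.onV x = inl j := by
  rw [h.imV]; rfl

theorem uV_inr (h : IsExtension j u v) (a : α.V) :
    ∃ w : β.V, u.onV (inr a) = inr w := by
  cases hx : u.onV (inr a) with
  | inr w => exact ⟨w, rfl⟩
  | inl i =>
    have hmem : (inl i : Fin 2 ⊕ β.V) ∈ Set.range u.onV := ⟨inr a, hx⟩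
    rw [mem_range_iff h, vV_inl h] at hmem
    have hij : i = j := by injection hmem
    subst hij
    have : (inr a : Fin 1 ⊕ α.V) = inl 0 := h.uVinj (hx.trans (uV_inl h).symm)
    exact absurd this (by simp)

theorem vV_eq_inl (h : IsExtension j u v) {i : Fin 2} (hij : i ≠ j)
    {x : Fin 2 ⊕ β.V} (hx : v.onV x = inl i) : x = inl i := by
  refine h.compVinj ?_ ?_ (by rw [hx, vV_inl h])
  · intro hx2
    rw [mem_range_iff h] at hx2
    rw [hx] at hx2
    exact hij (by injection hx2)
  · intro hx2
    rw [mem_range_iff h, vV_inl h] at hx2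
    exact hij (by injection hx2)

theorem vV_eq_inr (h : IsExtension j u v) {z : γ.V} {x y : Fin 2 ⊕ β.V}
    (hx : v.onV x = inr z) (hy : v.onV y = inr z) : x = y := by
  refine h.compVinj ?_ ?_ (hx.trans hy.symm)
  · intro hx2; rw [mem_range_iff h] at hx2; rw [hx] at hx2; exact absurd hx2 (by simp)
  · intro hy2; rw [mem_range_iff h] at hy2; rw [hy] at hy2; exact absurd hy2 (by simp)

theorem vV_inr_exists (h : IsExtension j u v) (z : γ.V) :
    ∃ w : β.V, v.onV (inr w) = inr z := by
  obtain ⟨x, hx⟩ := h.vVsurj (inr z)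
  cases x with
  | inl i => rw [vV_inl h] at hx; exact absurd hx (by simp)
  | inr w => exact ⟨w, hx⟩

theorem vV_inr_only (h : IsExtension j u v) {x : Fin 2 ⊕ β.V} {z : γ.V}
    (hx : v.onV x = inr z) : ∃ w : β.V, x = inr w := by
  cases x with
  | inl i => rw [vV_inl h] at hx; exact absurd hx (by simp)
  | inr w => exact ⟨w, rfl⟩

theorem src_tgt_of_image (h : IsExtension j u v) (hα : G2one α) {a : α.E} {e : β.E}
    (ha : u.onE a = inl e) :
    β.src e = inl j ∧ ∃ w : β.V, β.tgt e = inr w ∧ inr w ∈ Set.range u.onV := by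
  have he := u.hE a
  rw [ha] at he
  obtain ⟨hs, wα, ht⟩ := hα a
  rw [hs, ht, uV_inl h] at he
  have h1 : β.src e = inl j := congrArg Prod.fst he
  have h2 : β.tgt e = u.onV (inr wα) := congrArg Prod.snd he
  obtain ⟨w, hw⟩ := uV_inr h wα
  exact ⟨h1, w, h2.trans hw, ⟨inr wα, hw⟩⟩

theorem proj_edge (h : IsExtension j u v) {e : β.E} {eγ : γ.E}
    (he : v.onE e = inl eγ) :
    γ.src eγ = v.onV (β.src e) ∧ γ.tgt eγ = v.onV (β.tgt e) := by
  have h2 := v.hE e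
  rw [he] at h2
  exact ⟨congrArg Prod.fst h2, congrArg Prod.snd h2⟩

theorem not_image_of_proj (h : IsExtension j u v) {e : β.E} {eγ : γ.E}
    (he : v.onE e = inl eγ) : ¬ ∃ a, u.onE a = inl e := by
  intro hi
  have h1 : e ∈ {e' : β.E | ∃ a, u.onE a = inl e'} := hi
  rw [h.imE] at h1
  simp only [Set.mem_setOf_eq] at h1
  rw [he] at h1
  exact absurd h1 (by simp)

theorem edge_cases (h : IsExtension j u v) (e : β.E) :
    (∃ a, u.onE a = inl e) ∨
      ((¬ ∃ a, u.onE a = inl e) ∧ ∃ eγ, v.onE e = inl eγ) := by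
  by_cases hc : ∃ a, u.onE a = inl e
  · exact Or.inl hc
  · exact Or.inr ⟨hc, h.compEedge e hc⟩

end Ext


section Delta

open Sum Relation

variable {δ : PreGraph 2}

theorem trans_irrefl (h3 : G3two δ) :
    ∀ x, ¬ TransGen δ.Step x x := by
  intro x hx
  obtain ⟨y, hstep, hy⟩ := TransGen.head'_iff.mp hx
  obtain ⟨e, hs, ht⟩ := hstep
  exact h3.2.1 e (by rw [ht, hs]; exact hy)

theorem wf_fwd (h3 : G3two δ) :
    WellFounded (fun a b : Fin 2 ⊕ δ.V => TransGen δ.Step b a) := by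
  haveI : IsTrans (Fin 2 ⊕ δ.V) (fun a b => TransGen δ.Step b a) :=
    ⟨fun _ _ _ hab hbc => TransGen.trans hbc hab⟩
  haveI : IsIrrefl (Fin 2 ⊕ δ.V) (fun a b => TransGen δ.Step b a) :=
    ⟨fun a => trans_irrefl h3 a⟩
  exact Finite.wellFounded_of_trans_of_irrefl _

theorem wf_bwd (h3 : G3two δ) : WellFounded (TransGen δ.Step) := by
  haveI : IsTrans (Fin 2 ⊕ δ.V) (TransGen δ.Step) := ⟨fun _ _ _ => TransGen.trans⟩
  haveI : IsIrrefl (Fin 2 ⊕ δ.V) (TransGen δ.Step) := ⟨fun a => trans_irrefl h3 a⟩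
  exact Finite.wellFounded_of_trans_of_irrefl _

theorem reaches_label (h3 : G3two δ) (x : Fin 2 ⊕ δ.V) :
    ∃ i : Fin 2, δ.Reaches x (inl i) := by
  induction x using (wf_fwd h3).induction with
  | _ x IH =>
    cases x with
    | inl i => exact ⟨i, ReflTransGen.refl⟩
    | inr z =>
      obtain ⟨e, hs⟩ := (h3.1 z).2
      have hstep : δ.Step (inr z) (δ.tgt e) := ⟨e, hs, rfl⟩
      obtain ⟨i, hi⟩ := IH (δ.tgt e) (TransGen.single hstep)
      exact ⟨i, ReflTransGen.head hstep hi⟩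

theorem no_src_zero (h3 : G3two δ) (e : δ.E) : δ.src e ≠ inl 0 := by
  intro hs
  have hreach : δ.Reaches (δ.tgt e) (inl 0) ∨ δ.Reaches (δ.tgt e) (inl 1) := by
    cases htgt : δ.tgt e with
    | inl i =>
      rcases fin2cases i with rfl | rfl
      · exact Or.inl ReflTransGen.refl
      · exact Or.inr ReflTransGen.refl
    | inr z =>
      obtain ⟨i, hi⟩ := reaches_label h3 (inr z)
      rcases fin2cases i with rfl | rfl
      · exact Or.inl hi
      · exact Or.inr hi
  rcases hreach with hr | hr
  · exact h3.2.1 e (by rw [hs]; exact hr)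
  · exact h3.2.2 (ReflTransGen.head ⟨e, hs, rfl⟩ hr)

theorem reaches_zero_eq (h3 : G3two δ) {x : Fin 2 ⊕ δ.V}
    (h : δ.Reaches (inl 0) x) : x = inl 0 := by
  rcases h.cases_head with rfl | ⟨y, ⟨e, hs, _⟩, _⟩
  · rfl
  · exact absurd hs (no_src_zero h3 e)

theorem reached_from_label (h3 : G3two δ) (x : Fin 2 ⊕ δ.V) :
    ∃ i : Fin 2, δ.Reaches (inl i) x := by
  induction x using (wf_bwd h3).induction with
  | _ x IH =>
    cases x with
    | inl i => exact ⟨i, ReflTransGen.refl⟩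
    | inr z =>
      obtain ⟨e, ht⟩ := (h3.1 z).1
      have hstep : δ.Step (δ.src e) (inr z) := ⟨e, rfl, ht⟩
      obtain ⟨i, hi⟩ := IH (δ.src e) (TransGen.single hstep)
      exact ⟨i, ReflTransGen.tail hi hstep⟩

/-- If there is no edge from vertex `2` (label `1`) to an unlabelled vertex, then `δ` has
no unlabelled vertices at all. -/
theorem no_unlabelled (h3 : G3two δ)
    (hC : ∀ (e : δ.E) (z : δ.V), δ.src e = inl 1 → δ.tgt e ≠ inr z) :
    IsEmpty δ.V := by
  constructor
  intro z
  obtain ⟨i, hi⟩ := reached_from_label h3 (inr z)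
  rcases fin2cases i with rfl | rfl
  · exact absurd (reaches_zero_eq h3 hi) (by simp)
  · rcases hi.cases_head with heq | ⟨y, ⟨e, hs, ht⟩, hy⟩
    · exact absurd heq (by simp)
    · cases hyv : y with
      | inr z₁ => exact hC e z₁ hs (by rw [ht, hyv])
      | inl i₁ =>
        subst hyv
        rcases fin2cases i₁ with rfl | rfl
        · exact absurd (reaches_zero_eq h3 hy) (by simp)
        · exact h3.2.1 e (by rw [ht, hs]; exact Relation.ReflTransGen.refl)

/-- With no unlabelled vertices, every edge of a `𝒢₃(2)` graph goes from `1` to `0`. -/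
theorem delta_edges (h3 : G3two δ) (hV : IsEmpty δ.V) (e : δ.E) :
    δ.src e = inl 1 ∧ δ.tgt e = inl 0 := by
  have hs : δ.src e = inl 1 := by
    cases hsv : δ.src e with
    | inr z => exact (hV.false z).elim
    | inl i =>
      rcases fin2cases i with rfl | rfl
      · exact absurd hsv (no_src_zero h3 e)
      · rfl
  refine ⟨hs, ?_⟩
  cases htv : δ.tgt e with
  | inr z => exact (hV.false z).elim
  | inl i =>
    rcases fin2cases i with rfl | rfl
    · rfl
    · exact absurd (show δ.Reaches (δ.tgt e) (δ.src e) by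
        rw [htv, hs]; exact Relation.ReflTransGen.refl) (h3.2.1 e)

end Delta


section PartTwo

open Sum Relation

theorem part_two (γ : PreGraph 2) (hg : γ.IsGraph) (h4 : G4two γ)
    (hyp : ∀ (e : γ.E) (w : γ.V), γ.src e = Sum.inl 1 → γ.tgt e = Sum.inr w →
      (∃ e' : γ.E, γ.src e' = Sum.inl 0 ∧ γ.tgt e' = Sum.inr w) ∨ γ.IsSink w) :
    G2two γ := by
  obtain ⟨α₁, α₂, δ, β', u₁, v₁, u₂, v₂, hGα₁, hGα₂, hGδ, hGβ, h2α₁, h2α₂, h3, hx1, hx2⟩ := h4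
  -- Pushing a `γ`-edge with source the label `0` down to `δ` gives an edge with source the
  -- label `0` (forbidden in `𝒢₃(2)`) unless its target collapses into vertex `1` of `δ`.
  have key0 : ∀ e₀ : γ.E, γ.src e₀ = inl 0 →
      v₁.onV (v₂.onV (γ.tgt e₀)) ≠ inl 0 → False := by
    intro e₀ hs hne
    have hni : ¬ ∃ a, u₂.onE a = inl e₀ := by
      rintro ⟨a, ha⟩
      have h1 := (src_tgt_of_image hx2 h2α₂ ha).1
      rw [hs] at h1
      exact absurd h1 (by simp)
    obtain ⟨e', he'⟩ := hx2.compEedge e₀ hni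
    obtain ⟨hs', ht'⟩ := proj_edge hx2 he'
    have hs'' : β'.src e' = inl 0 := by rw [hs', hs, vV_inl hx2]
    have hni' : ¬ ∃ a, u₁.onE a = inl e' := by
      rintro ⟨a, ha⟩
      obtain ⟨_, w, htw, hw⟩ := src_tgt_of_image hx1 h2α₁ ha
      rw [mem_range_iff hx1] at hw
      exact hne (by rw [← ht', htw, hw])
    obtain ⟨e'', he''⟩ := hx1.compEedge e' hni'
    have hfin := (proj_edge hx1 he'').1
    rw [hs'', vV_inl hx1] at hfin
    exact no_src_zero h3 e'' hfin
  -- No edge of `γ` can have as source an unlabelled vertex lying in the `α₂`-part.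
  have keyA2 : ∀ (e : γ.E) (a : α₂.V), γ.src e = u₂.onV (inr a) → False := by
    intro e a hsrc
    obtain ⟨w₂, hw₂⟩ := uV_inr hx2 a
    obtain ⟨b, hb⟩ := hGα₂ a
    have htb : α₂.tgt b = inr a := by
      rcases hb with hb | hb
      · rw [(h2α₂ b).1] at hb; exact absurd hb (by simp)
      · exact hb
    obtain ⟨g, hg'⟩ := hx2.uEedge b
    have hge := u₂.hE b
    rw [hg'] at hge
    have hsg : γ.src g = inl 1 := by
      have h1 := congrArg Prod.fst hge
      rw [(h2α₂ b).1, uV_inl hx2] at h1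
      exact h1
    have htg : γ.tgt g = inr w₂ := by
      have h1 := congrArg Prod.snd hge
      rw [htb, hw₂] at h1
      exact h1
    rcases hyp g w₂ hsg htg with ⟨e₀, hs₀, ht₀⟩ | hsink
    · apply key0 e₀ hs₀
      have hr : v₂.onV (inr w₂) = inl 1 :=
        (mem_range_iff hx2 _).mp ⟨inr a, hw₂⟩
      rw [ht₀, hr, vV_inl hx1]
      simp
    · exact hsink ⟨e, by rw [hsrc, hw₂]⟩
  -- `δ` has no edges from vertex `2` to an unlabelled vertex.
  have claimC : ∀ (e'' : δ.E) (z : δ.V), δ.src e'' = inl 1 → δ.tgt e'' ≠ inr z := by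
    intro e'' z hs ht
    obtain ⟨e', he'⟩ := hx1.vEsurj e''
    obtain ⟨hse, hte⟩ := proj_edge hx1 he'
    have hbs : β'.src e' = inl 1 := vV_eq_inl hx1 (by decide) (hse.symm.trans hs)
    have htz : v₁.onV (β'.tgt e') = inr z := hte.symm.trans ht
    obtain ⟨w', hbw'⟩ := vV_inr_only hx1 htz
    have hw'z : v₁.onV (inr w') = inr z := by rw [← hbw']; exact htz
    obtain ⟨e, he⟩ := hx2.vEsurj e'
    obtain ⟨hse2, hte2⟩ := proj_edge hx2 he
    have hmem : γ.src e ∈ Set.range u₂.onV :=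
      (mem_range_iff hx2 _).mpr (hse2.symm.trans hbs)
    obtain ⟨p, hp⟩ := hmem
    have htw' : v₂.onV (γ.tgt e) = inr w' := hte2.symm.trans hbw'
    obtain ⟨w, hwe⟩ := vV_inr_only hx2 htw'
    have hww' : v₂.onV (inr w) = inr w' := by rw [← hwe]; exact htw'
    cases p with
    | inr a => exact keyA2 e a hp.symm
    | inl i =>
      have hi : i = 0 := Subsingleton.elim i 0
      subst hi
      have hsrc1 : γ.src e = inl 1 := by rw [← hp, uV_inl hx2]
      have hns : ¬ γ.IsSink w := by
        intro hsk; apply hsk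
        obtain ⟨f'', hf''s⟩ := (h3.1 z).2
        obtain ⟨f', hf'⟩ := hx1.vEsurj f''
        obtain ⟨hsf, _⟩ := proj_edge hx1 hf'
        have hvz : v₁.onV (β'.src f') = inr z := hsf.symm.trans hf''s
        obtain ⟨w₃', hw₃'⟩ := vV_inr_only hx1 hvz
        have hsw' : β'.src f' = inr w' := by
          rw [hw₃']
          exact vV_eq_inr hx1 (by rw [← hw₃']; exact hvz) hw'z
        obtain ⟨f, hf⟩ := hx2.vEsurj f'
        obtain ⟨hsf2, _⟩ := proj_edge hx2 hf
        have hv : v₂.onV (γ.src f) = inr w' := hsf2.symm.trans hsw'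
        have heq := vV_eq_inr hx2 hv hww'
        exact ⟨f, heq⟩
      rcases hyp e w hsrc1 hwe with ⟨e₀, hs₀, ht₀⟩ | hsink
      · apply key0 e₀ hs₀
        rw [ht₀, hww', hw'z]
        simp
      · exact hns hsink
  have hempty : IsEmpty δ.V := no_unlabelled h3 claimC
  -- final classification of the edges of `γ`
  intro e
  rcases edge_cases hx2 e with ⟨a, ha⟩ | ⟨hni, e', he'⟩
  · obtain ⟨hs, w, ht, _⟩ := src_tgt_of_image hx2 h2α₂ ha
    exact Or.inl ⟨Or.inr hs, w, ht⟩
  · obtain ⟨hse, hte⟩ := proj_edge hx2 he'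
    rcases edge_cases hx1 e' with ⟨a, ha'⟩ | ⟨hni', e'', he''⟩
    · obtain ⟨hs', w', ht', _⟩ := src_tgt_of_image hx1 h2α₁ ha'
      have hsrc : γ.src e = inl 0 :=
        vV_eq_inl hx2 (by decide) (hse.symm.trans hs')
      obtain ⟨w, hw⟩ := vV_inr_only hx2 (hte.symm.trans ht')
      exact Or.inl ⟨Or.inl hsrc, w, hw⟩
    · obtain ⟨hsd, htd⟩ := proj_edge hx1 he''
      obtain ⟨hd1, hd0⟩ := delta_edges h3 hempty e''
      have hbs : β'.src e' = inl 1 :=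
        vV_eq_inl hx1 (by decide) (hsd.symm.trans hd1)
      have hmem : γ.src e ∈ Set.range u₂.onV :=
        (mem_range_iff hx2 _).mpr (hse.symm.trans hbs)
      obtain ⟨p, hp⟩ := hmem
      have hsrc1 : γ.src e = inl 1 := by
        cases p with
        | inr a => exact absurd hp.symm (fun h => keyA2 e a h)
        | inl i =>
          have hi : i = 0 := Subsingleton.elim i 0
          subst hi
          rw [← hp, uV_inl hx2]
      have hbt : β'.tgt e' ∈ Set.range u₁.onV :=
        (mem_range_iff hx1 _).mpr (htd.symm.trans hd0)
      obtain ⟨q, hq⟩ := hbt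
      cases q with
      | inl i =>
        have hi : i = 0 := Subsingleton.elim i 0
        subst hi
        rw [uV_inl hx1] at hq
        have htgt : γ.tgt e = inl 0 :=
          vV_eq_inl hx2 (by decide) (hte.symm.trans hq.symm)
        exact Or.inr ⟨hsrc1, htgt⟩
      | inr a =>
        obtain ⟨w', hw'⟩ := uV_inr hx1 a
        rw [hw'] at hq
        obtain ⟨w, hw⟩ := vV_inr_only hx2 (hte.symm.trans hq.symm)
        exact Or.inl ⟨Or.inr hsrc1, w, hw⟩

end PartTwo


namespace P1

open Sum

variable (γ : PreGraph 2)

/-- The targets of edges outgoing from the labelled vertex `1` (label `0`). -/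
def VA (w : γ.V) : Prop := ∃ e, γ.src e = inl 0 ∧ γ.tgt e = inr w

/-- Edges from the labelled vertex `2` (label `1`) to an unlabelled vertex not in `VA`. -/
def A2E (e : γ.E) : Prop := ∃ w, γ.src e = inl 1 ∧ γ.tgt e = inr w ∧ ¬ VA γ w

noncomputable def mapV : Fin 2 ⊕ γ.V → Fin 2 ⊕ {w : γ.V // VA γ w}
  | inl i => inl i
  | inr w => if h : VA γ w then inr ⟨w, h⟩ else inl 1

theorem mapV_va {w : γ.V} (h : VA γ w) : mapV γ (inr w) = inr ⟨w, h⟩ := dif_pos h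
theorem mapV_nva {w : γ.V} (h : ¬ VA γ w) : mapV γ (inr w) = inl 1 := dif_neg h

theorem not_A2E_of_src0 {e : γ.E} (h : γ.src e = inl 0) : ¬ A2E γ e := by
  rintro ⟨w, hs, _⟩
  rw [h] at hs
  exact absurd (Sum.inl.inj hs) (by decide)

def alf1 : PreGraph 1 where
  V := {w : γ.V // VA γ w}
  E := {p : γ.E × γ.V // γ.src p.1 = inl 0 ∧ γ.tgt p.1 = inr p.2}
  finV := inferInstance
  finE := inferInstance
  src := fun _ => inl 0
  tgt := fun p => inr ⟨p.1.2, ⟨p.1.1, p.2.1, p.2.2⟩⟩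

def alf2 : PreGraph 1 where
  V := {w : γ.V // ¬ VA γ w}
  E := {p : γ.E × γ.V // γ.src p.1 = inl 1 ∧ γ.tgt p.1 = inr p.2 ∧ ¬ VA γ p.2}
  finV := inferInstance
  finE := inferInstance
  src := fun _ => inl 0
  tgt := fun p => inr ⟨p.1.2, p.2.2.2⟩

noncomputable def bet : PreGraph 2 where
  V := {w : γ.V // VA γ w}
  E := {e : γ.E // ¬ A2E γ e}
  finV := inferInstance
  finE := inferInstance
  src := fun e => mapV γ (γ.src e.1)
  tgt := fun e => mapV γ (γ.tgt e.1)

def del : PreGraph 2 where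
  V := Empty
  E := {e : γ.E // ¬ A2E γ e ∧ γ.src e ≠ inl 0}
  finV := inferInstance
  finE := inferInstance
  src := fun _ => inl 1
  tgt := fun _ => inl 0

theorem del_no01 : ¬ (del γ).Reaches (inl 0) (inl 1) := by
  intro h
  rcases h.cases_head with heq | ⟨y, ⟨e, hs, _⟩, _⟩
  · exact absurd (Sum.inl.inj heq) (by decide)
  · exact absurd (Sum.inl.inj hs) (by decide)

variable {γ}

theorem src1 (hγ : G2two γ) {e : γ.E} (h : γ.src e ≠ inl 0) : γ.src e = inl 1 := by
  rcases hγ e with ⟨h0 | h1, _⟩ | ⟨h1, _⟩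
  · exact absurd h0 h
  · exact h1
  · exact h1

theorem tgt_of_src0 (hγ : G2two γ) {e : γ.E} (h : γ.src e = inl 0) :
    ∃ w, γ.tgt e = inr w ∧ VA γ w := by
  rcases hγ e with ⟨_, w, ht⟩ | ⟨h1, _⟩
  · exact ⟨w, ht, ⟨e, h, ht⟩⟩
  · rw [h] at h1; exact absurd (Sum.inl.inj h1) (by decide)

theorem tgt_of_bet (hγ : G2two γ) {e : γ.E} (hA : ¬ A2E γ e) (hs : γ.src e = inl 1) :
    γ.tgt e = inl 0 ∨ ∃ w, γ.tgt e = inr w ∧ VA γ w := by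
  rcases hγ e with ⟨_, w, ht⟩ | ⟨_, ht⟩
  · by_cases hva : VA γ w
    · exact Or.inr ⟨w, ht, hva⟩
    · exact absurd ⟨w, hs, ht, hva⟩ hA
  · exact Or.inl ht

variable (γ)

def u1 : GMor (alf1 γ) (bet γ) where
  onL := fun _ => 0
  monoL := monotone_const
  onV := fun x => match x with
    | inl _ => inl 0
    | inr w => inr w
  hL := fun _ => rfl
  onE := fun p => inl ⟨p.1.1, not_A2E_of_src0 γ p.2.1⟩
  hE := fun p => by
    have hva : VA γ p.1.2 := ⟨p.1.1, p.2.1, p.2.2⟩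
    refine Prod.ext ?_ ?_
    · show mapV γ (γ.src p.1.1) = _
      rw [p.2.1]; rfl
    · show mapV γ (γ.tgt p.1.1) = _
      rw [p.2.2, mapV_va γ hva]; rfl

def u2 : GMor (alf2 γ) γ where
  onL := fun _ => 1
  monoL := monotone_const
  onV := fun x => match x with
    | inl _ => inl 1
    | inr w => inr w.1
  hL := fun _ => rfl
  onE := fun p => inl p.1.1
  hE := fun p => by
    refine Prod.ext ?_ ?_
    · show γ.src p.1.1 = _
      rw [p.2.1]; rfl
    · show γ.tgt p.1.1 = _
      rw [p.2.2.1]; rfl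

noncomputable def v2 : GMor γ (bet γ) where
  onL := id
  monoL := monotone_id
  onV := mapV γ
  hL := fun _ => rfl
  onE := fun e => if h : A2E γ e then inr (inl 1) else inl ⟨e, h⟩
  hE := fun e => by
    by_cases h : A2E γ e
    · rw [dif_pos h]
      obtain ⟨w, hs, ht, hw⟩ := h
      refine Prod.ext ?_ ?_
      · show (inl 1 : Fin 2 ⊕ (bet γ).V) = mapV γ (γ.src e)
        rw [hs]; rfl
      · show (inl 1 : Fin 2 ⊕ (bet γ).V) = mapV γ (γ.tgt e)
        rw [ht, mapV_nva γ hw]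
        rfl
    · rw [dif_neg h]
      rfl

noncomputable def v1 (hγ : G2two γ) : GMor (bet γ) (del γ) where
  onL := id
  monoL := monotone_id
  onV := fun x => match x with
    | inl i => inl i
    | inr _ => inl 0
  hL := fun _ => rfl
  onE := fun e => if h : γ.src e.1 = inl 0 then inr (inl 0) else inl ⟨e.1, e.2, h⟩
  hE := fun e => by
    by_cases h : γ.src e.1 = inl 0
    · rw [dif_pos h]
      obtain ⟨w, ht, hva⟩ := tgt_of_src0 hγ h
      refine Prod.ext ?_ ?_
      · show (inl 0 : Fin 2 ⊕ (del γ).V) = _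
        show (inl 0 : Fin 2 ⊕ (del γ).V) =
          (match mapV γ (γ.src e.1) with
            | inl i => (inl i : Fin 2 ⊕ (del γ).V)
            | inr _ => inl 0)
        rw [h]; rfl
      · show (inl 0 : Fin 2 ⊕ (del γ).V) =
          (match mapV γ (γ.tgt e.1) with
            | inl i => (inl i : Fin 2 ⊕ (del γ).V)
            | inr _ => inl 0)
        rw [ht, mapV_va γ hva]
    · rw [dif_neg h]
      have hs := src1 hγ h
      refine Prod.ext ?_ ?_
      · show (inl 1 : Fin 2 ⊕ (del γ).V) =
          (match mapV γ (γ.src e.1) with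
            | inl i => (inl i : Fin 2 ⊕ (del γ).V)
            | inr _ => inl 0)
        rw [hs]; rfl
      · rcases tgt_of_bet hγ e.2 hs with ht | ⟨w, ht, hva⟩
        · show (inl 0 : Fin 2 ⊕ (del γ).V) =
            (match mapV γ (γ.tgt e.1) with
              | inl i => (inl i : Fin 2 ⊕ (del γ).V)
              | inr _ => inl 0)
          rw [ht]; rfl
        · show (inl 0 : Fin 2 ⊕ (del γ).V) =
            (match mapV γ (γ.tgt e.1) with
              | inl i => (inl i : Fin 2 ⊕ (del γ).V)
              | inr _ => inl 0)
          rw [ht, mapV_va γ hva]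

end P1


namespace P1

open Sum

variable (γ : PreGraph 2)

theorem isGraph_alf1 : (alf1 γ).IsGraph := by
  rintro ⟨w, e, hs, ht⟩
  exact ⟨⟨(e, w), hs, ht⟩, Or.inr rfl⟩

theorem isGraph_alf2 (hg : γ.IsGraph) (hγ : G2two γ) : (alf2 γ).IsGraph := by
  rintro ⟨w, hn⟩
  obtain ⟨e, he⟩ := hg w
  have hsl : ∃ i, γ.src e = inl i := by
    rcases hγ e with ⟨h0 | h1, _⟩ | ⟨h1, _⟩
    · exact ⟨0, h0⟩
    · exact ⟨1, h1⟩
    · exact ⟨1, h1⟩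
  have ht : γ.tgt e = inr w := by
    rcases he with he | he
    · obtain ⟨i, hi⟩ := hsl
      rw [hi] at he
      exact absurd he (by simp)
    · exact he
  rcases hγ e with ⟨h0 | h1, w', ht'⟩ | ⟨_, ht0⟩
  · exact absurd ⟨e, h0, ht⟩ hn
  · exact ⟨⟨(e, w), h1, ht, hn⟩, Or.inr rfl⟩
  · rw [ht0] at ht; exact absurd ht (by simp)

theorem isGraph_del : (del γ).IsGraph := fun z => z.elim

theorem isGraph_bet : (bet γ).IsGraph := by
  intro x
  obtain ⟨w, hva⟩ := x
  obtain ⟨e, hs, ht⟩ := id hva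
  refine ⟨⟨e, not_A2E_of_src0 γ hs⟩, Or.inr ?_⟩
  show mapV γ (γ.tgt e) = _
  rw [ht, mapV_va γ hva]
  rfl

theorem g2one_alf1 : G2one (alf1 γ) := fun p => ⟨rfl, _, rfl⟩

theorem g2one_alf2 : G2one (alf2 γ) := fun p => ⟨rfl, _, rfl⟩

theorem g3two_del : G3two (del γ) :=
  ⟨fun z => z.elim, fun _ hr => del_no01 γ hr, del_no01 γ⟩

variable {γ}

theorem ext1 (hγ : G2two γ) : IsExtension (0 : Fin 2) (u1 γ) (v1 γ hγ) where
  uLab := fun i => by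
    show (0 : Fin 2).val = (0 : Fin 2).val + i.val
    omega
  vLab := fun i => qmap_zero.symm
  uVinj := by
    intro x y h
    cases x with
    | inl i =>
      cases y with
      | inl i' => exact congrArg inl (by omega)
      | inr w =>
        have h' : (inl 0 : Fin 2 ⊕ (bet γ).V) = inr w := h
        exact absurd h' (by simp)
    | inr w =>
      cases y with
      | inl i' =>
        have h' : (inr w : Fin 2 ⊕ (bet γ).V) = inl 0 := h
        exact absurd h' (by simp)
      | inr w' =>
        have h' : (inr w : Fin 2 ⊕ (bet γ).V) = inr w' := h
        exact congrArg inr (Sum.inr.inj h')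
  uEedge := fun e => ⟨_, rfl⟩
  uEinj := by
    intro p q h
    have h1 : p.1.1 = q.1.1 :=
      congrArg (fun x => match x with | Sum.inl s => s.1 | Sum.inr _ => p.1.1) h
    have hp := p.2.2
    have hq := q.2.2
    rw [h1] at hp
    have h2 : p.1.2 = q.1.2 := Sum.inr.inj (hp.symm.trans hq)
    exact Subtype.ext (Prod.ext h1 h2)
  vVsurj := by
    intro x
    cases x with
    | inl i => exact ⟨inl i, rfl⟩
    | inr z => exact z.elim
  vEsurj := by
    rintro ⟨e, hA, hs⟩
    exact ⟨⟨e, hA⟩, dif_neg hs⟩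
  imV := by
    apply Set.eq_of_subset_of_subset
    · rintro x ⟨p, rfl⟩
      cases p with
      | inl i => rfl
      | inr w => rfl
    · intro x hx
      cases x with
      | inl i =>
        have hx' : (inl i : Fin 2 ⊕ (del γ).V) = inl 0 := hx
        have : i = 0 := Sum.inl.inj hx'
        subst this
        exact ⟨inl 0, rfl⟩
      | inr w => exact ⟨inr w, rfl⟩
  imE := by
    ext e'
    simp only [Set.mem_setOf_eq]
    constructor
    · rintro ⟨p, hp⟩
      have h1 : p.1.1 = e'.1 :=
        congrArg (fun x => match x with | Sum.inl s => s.1 | Sum.inr _ => p.1.1) hp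
      have hs : γ.src e'.1 = inl 0 := by rw [← h1]; exact p.2.1
      exact dif_pos hs
    · intro h
      by_cases hs : γ.src e'.1 = inl 0
      · obtain ⟨w, ht, _⟩ := tgt_of_src0 hγ hs
        exact ⟨⟨(e'.1, w), hs, ht⟩, congrArg inl (Subtype.ext rfl)⟩
      · have h2 : (v1 γ hγ).onE e' = inl ⟨e'.1, e'.2, hs⟩ := dif_neg hs
        rw [h2] at h
        exact absurd h (by simp)
  compEedge := by
    intro e' hni
    by_cases hs : γ.src e'.1 = inl 0
    · exfalso
      obtain ⟨w, ht, _⟩ := tgt_of_src0 hγ hs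
      exact hni ⟨⟨(e'.1, w), hs, ht⟩, congrArg inl (Subtype.ext rfl)⟩
    · exact ⟨⟨e'.1, e'.2, hs⟩, dif_neg hs⟩
  compVinj := by
    have key : ∀ z, z ∉ Set.range (u1 γ).onV → z = inl 1 := by
      intro z hz
      cases z with
      | inl i =>
        rcases fin2cases i with rfl | rfl
        · exact absurd ⟨inl 0, rfl⟩ hz
        · rfl
      | inr w => exact absurd ⟨inr w, rfl⟩ hz
    intro x hx y hy _
    rw [key x hx, key y hy]
  compEinj := by
    intro a ha b hb hab
    have hsa : γ.src a.1 ≠ inl 0 := by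
      intro hs
      obtain ⟨w, ht, _⟩ := tgt_of_src0 hγ hs
      exact ha ⟨⟨(a.1, w), hs, ht⟩, congrArg inl (Subtype.ext rfl)⟩
    have hsb : γ.src b.1 ≠ inl 0 := by
      intro hs
      obtain ⟨w, ht, _⟩ := tgt_of_src0 hγ hs
      exact hb ⟨⟨(b.1, w), hs, ht⟩, congrArg inl (Subtype.ext rfl)⟩
    have h1 : (v1 γ hγ).onE a = inl ⟨a.1, a.2, hsa⟩ := dif_neg hsa
    have h2 : (v1 γ hγ).onE b = inl ⟨b.1, b.2, hsb⟩ := dif_neg hsb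
    rw [h1, h2] at hab
    have h3 : a.1 = b.1 :=
      congrArg (fun x => match x with | Sum.inl s => s.1 | Sum.inr _ => a.1) hab
    exact Subtype.ext h3

theorem ext2 (hγ : G2two γ) : IsExtension (1 : Fin 2) (u2 γ) (v2 γ) where
  uLab := fun i => by
    show (1 : Fin 2).val = (1 : Fin 2).val + i.val
    omega
  vLab := fun i => qmap_zero.symm
  uVinj := by
    intro x y h
    cases x with
    | inl i =>
      cases y with
      | inl i' => exact congrArg inl (by omega)
      | inr w =>
        have h' : (inl 1 : Fin 2 ⊕ γ.V) = inr w.1 := h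
        exact absurd h' (by simp)
    | inr w =>
      cases y with
      | inl i' =>
        have h' : (inr w.1 : Fin 2 ⊕ γ.V) = inl 1 := h
        exact absurd h' (by simp)
      | inr w' =>
        have h' : (inr w.1 : Fin 2 ⊕ γ.V) = inr w'.1 := h
        exact congrArg inr (Subtype.ext (Sum.inr.inj h'))
  uEedge := fun e => ⟨_, rfl⟩
  uEinj := by
    intro p q h
    have h1 : p.1.1 = q.1.1 :=
      congrArg (fun x => match x with | Sum.inl s => s | Sum.inr _ => p.1.1) h
    have hp := p.2.2.1
    have hq := q.2.2.1
    rw [h1] at hp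
    have h2 : p.1.2 = q.1.2 := Sum.inr.inj (hp.symm.trans hq)
    exact Subtype.ext (Prod.ext h1 h2)
  vVsurj := by
    intro x
    cases x with
    | inl i => exact ⟨inl i, rfl⟩
    | inr w => exact ⟨inr w.1, mapV_va γ w.2⟩
  vEsurj := by
    rintro ⟨e, hA⟩
    exact ⟨e, dif_neg hA⟩
  imV := by
    apply Set.eq_of_subset_of_subset
    · rintro x ⟨p, rfl⟩
      cases p with
      | inl i => rfl
      | inr w => exact mapV_nva γ w.2
    · intro x hx
      cases x with
      | inl i =>
        have hx' : (inl i : Fin 2 ⊕ (bet γ).V) = inl 1 := hx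
        have : i = 1 := Sum.inl.inj hx'
        subst this
        exact ⟨inl 0, rfl⟩
      | inr w =>
        have hx' : mapV γ (inr w) = inl 1 := hx
        by_cases hva : VA γ w
        · rw [mapV_va γ hva] at hx'
          exact absurd hx' (by simp)
        · exact ⟨inr ⟨w, hva⟩, rfl⟩
  imE := by
    ext e
    simp only [Set.mem_setOf_eq]
    constructor
    · rintro ⟨p, hp⟩
      have h1 : p.1.1 = e :=
        congrArg (fun x => match x with | Sum.inl s => s | Sum.inr _ => p.1.1) hp
      have hA : A2E γ e := by
        rw [← h1]
        exact ⟨p.1.2, p.2.1, p.2.2.1, p.2.2.2⟩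
      exact dif_pos hA
    · intro h
      by_cases hA : A2E γ e
      · obtain ⟨w, hs, ht, hn⟩ := hA
        exact ⟨⟨(e, w), hs, ht, hn⟩, rfl⟩
      · have h2 : (v2 γ).onE e = inl ⟨e, hA⟩ := dif_neg hA
        rw [h2] at h
        exact absurd h (by simp)
  compEedge := by
    intro e hni
    by_cases hA : A2E γ e
    · exfalso
      obtain ⟨w, hs, ht, hn⟩ := hA
      exact hni ⟨⟨(e, w), hs, ht, hn⟩, rfl⟩
    · exact ⟨⟨e, hA⟩, dif_neg hA⟩
  compVinj := by
    intro x hx y hy hxy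
    cases x with
    | inl i =>
      rcases fin2cases i with rfl | rfl
      swap
      · exact absurd ⟨inl 0, rfl⟩ hx
      cases y with
      | inl i' =>
        rcases fin2cases i' with rfl | rfl
        · rfl
        · exact absurd ⟨inl 0, rfl⟩ hy
      | inr w' =>
        have hva' : VA γ w' := by
          by_contra hn
          exact hy ⟨inr ⟨w', hn⟩, rfl⟩
        have h' : mapV γ (inl 0) = mapV γ (inr w') := hxy
        rw [mapV_va γ hva'] at h'
        exact absurd h' (by simp [mapV])
    | inr w =>
      have hva : VA γ w := by
        by_contra hn
        exact hx ⟨inr ⟨w, hn⟩, rfl⟩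
      cases y with
      | inl i' =>
        rcases fin2cases i' with rfl | rfl
        swap
        · exact absurd ⟨inl 0, rfl⟩ hy
        have h' : mapV γ (inr w) = mapV γ (inl 0) := hxy
        rw [mapV_va γ hva] at h'
        exact absurd h' (by simp [mapV])
      | inr w' =>
        have hva' : VA γ w' := by
          by_contra hn
          exact hy ⟨inr ⟨w', hn⟩, rfl⟩
        have h' : mapV γ (inr w) = mapV γ (inr w') := hxy
        rw [mapV_va γ hva, mapV_va γ hva'] at h'
        exact congrArg inr (congrArg Subtype.val (Sum.inr.inj h'))
  compEinj := by
    intro a ha b hb hab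
    have hsa : ¬ A2E γ a := by
      intro hA
      obtain ⟨w, hs, ht, hn⟩ := hA
      exact ha ⟨⟨(a, w), hs, ht, hn⟩, rfl⟩
    have hsb : ¬ A2E γ b := by
      intro hA
      obtain ⟨w, hs, ht, hn⟩ := hA
      exact hb ⟨⟨(b, w), hs, ht, hn⟩, rfl⟩
    have h1 : (v2 γ).onE a = inl ⟨a, hsa⟩ := dif_neg hsa
    have h2 : (v2 γ).onE b = inl ⟨b, hsb⟩ := dif_neg hsb
    rw [h1, h2] at hab
    exact congrArg (fun x => match x with | Sum.inl s => s.1 | Sum.inr _ => a) hab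

theorem part_one (γ : PreGraph 2) (hg : γ.IsGraph) (hγ : G2two γ) : G4two γ :=
  ⟨alf1 γ, alf2 γ, del γ, bet γ, u1 γ, v1 γ hγ, u2 γ, v2 γ,
    isGraph_alf1 γ, isGraph_alf2 γ hg hγ, isGraph_del γ, isGraph_bet γ,
    g2one_alf1 γ, g2one_alf2 γ, g3two_del γ, ext1 hγ, ext2 hγ⟩

end P1

/-- (i) `𝒢₂(2) ⊆ 𝒢₄(2)`.
(ii) If `γ ∈ 𝒢₄(2)` and no edge outgoing from the labelled vertex `2` has as target an
unlabelled vertex that is neither a target of an edge outgoing from the labelled vertex `1`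
(i.e. a vertex of the subgraph `α`) nor a sink of `γ`, then `γ ∈ 𝒢₂(2)`. -/
theorem G2_subset_G4_and_cancellation :
    (∀ γ : PreGraph 2, γ.IsGraph → G2two γ → G4two γ) ∧
    (∀ γ : PreGraph 2, γ.IsGraph → G4two γ →
      (∀ (e : γ.E) (w : γ.V), γ.src e = Sum.inl 1 → γ.tgt e = Sum.inr w →
        (∃ e' : γ.E, γ.src e' = Sum.inl 0 ∧ γ.tgt e' = Sum.inr w) ∨ γ.IsSink w) →
      G2two γ) :=
  ⟨P1.part_one, part_two⟩
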